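/- Let a < b and let y : [a,b] → ℝ be continuously differentiable. For each δ > 0 let f̃_δ : [a,b] → ℝ be a continuous function with sup_{t∈[a,b]} |f̃_δ(t) − (y(t) − y(a) − y′(a)(t − a))| ≤ δ, set α = √δ, and define x̃_δ(t) = f̃_δ(t)/α − (1/α²) ∫_a^t e^{−(t−s)/α} f̃_δ(s) ds. Then sup_{t∈[a,b]} |x̃_δ(t) − (y′(t) − y′(a))| → 0 as δ → 0⁺; i.e. formula (34) with the coordination α = √δ gives a regularized differentiation algorithm converging uniformly on [a,b]. -/

import Mathlib

open Set Filter Topology intervalIntegral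

lemma sd_exp_deriv (t α : ℝ) (hα : 0 < α) (s : ℝ) :
    HasDerivAt (fun s : ℝ => α * Real.exp (-((t - s) / α)))
      (Real.exp (-((t - s) / α))) s := by
  have h1 : HasDerivAt (fun s : ℝ => -((t - s) / α)) (1 / α) s := by
    have h0 := (((hasDerivAt_id s).const_sub t).div_const α).neg
    simpa [neg_div, id, Pi.neg_def] using h0
  have h2 := (h1.exp).const_mul α
  rw [show α * (Real.exp (-((t - s) / α)) * (1 / α)) = Real.exp (-((t - s) / α)) by
    field_simp] at h2
  exact h2

lemma sd_exp_int (a t α : ℝ) (hα : 0 < α) :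
    ∫ s in a..t, Real.exp (-((t - s) / α))
      = α * (1 - Real.exp (-((t - a) / α))) := by
  have hcont : Continuous fun s : ℝ => Real.exp (-((t - s) / α)) := by continuity
  rw [intervalIntegral.integral_eq_sub_of_hasDerivAt
      (fun s _ => sd_exp_deriv t α hα s) (hcont.intervalIntegrable a t)]
  simp [mul_sub]

lemma sd_parts (w : ℝ → ℝ) (hw : Continuous w) (a t α : ℝ) (hα : 0 < α) :
    ∫ s in a..t, Real.exp (-((t - s) / α)) * (∫ u in a..s, w u)
      = α * (∫ u in a..t, w u)
        - α * ∫ s in a..t, Real.exp (-((t - s) / α)) * w s := by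
  set G : ℝ → ℝ := fun s => ∫ u in a..s, w u with hG
  have hcontE : Continuous fun s : ℝ => Real.exp (-((t - s) / α)) := by continuity
  have hu : ∀ x ∈ uIcc a t, HasDerivAt (fun s : ℝ => Real.exp (-((t - s) / α)))
      (Real.exp (-((t - x) / α)) * (1 / α)) x := by
    intro x _
    have h1 : HasDerivAt (fun s : ℝ => -((t - s) / α)) (1 / α) x := by
      have h0 := (((hasDerivAt_id x).const_sub t).div_const α).neg
      simpa [neg_div, id, Pi.neg_def] using h0
    exact h1.exp
  have hv : ∀ x ∈ uIcc a t, HasDerivAt G (w x) x := by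
    intro x _
    exact intervalIntegral.integral_hasDerivAt_right
      (hw.intervalIntegrable a x) (hw.stronglyMeasurableAtFilter _ _)
      hw.continuousAt
  have hu' : IntervalIntegrable (fun x : ℝ => Real.exp (-((t - x) / α)) * (1 / α))
      MeasureTheory.volume a t := ((hcontE.mul continuous_const).intervalIntegrable a t)
  have key := intervalIntegral.integral_mul_deriv_eq_deriv_mul hu hv hu'
    (hw.intervalIntegrable a t)
  have hGa : G a = 0 := by simp [hG]
  have h2 : ∫ s in a..t, Real.exp (-((t - s) / α)) * (1 / α) * G s
      = (1 / α) * ∫ s in a..t, Real.exp (-((t - s) / α)) * G s := by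
    rw [← intervalIntegral.integral_const_mul]
    apply intervalIntegral.integral_congr
    intro s _; ring
  rw [hGa, h2] at key
  have hα' : α ≠ 0 := ne_of_gt hα
  have h3 : Real.exp (-((t - t) / α)) = 1 := by simp
  rw [h3] at key
  field_simp at key ⊢
  linarith

set_option maxHeartbeats 2000000 in
theorem stable_differentiation
    (a b : ℝ) (hab : a < b) (y y' : ℝ → ℝ)
    (hderiv : ∀ t ∈ Icc a b, HasDerivWithinAt y (y' t) (Icc a b) t)
    (hy'cont : ContinuousOn y' (Icc a b))
    (ftil : ℝ → ℝ → ℝ)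
    (hcont : ∀ δ > 0, ContinuousOn (ftil δ) (Icc a b))
    (hnoise : ∀ δ > 0, ∀ t ∈ Icc a b,
      |ftil δ t - (y t - y a - y' a * (t - a))| ≤ δ) :
    ∀ ε > 0, ∃ δ₀ > 0, ∀ δ : ℝ, 0 < δ → δ < δ₀ → ∀ t ∈ Icc a b,
      |ftil δ t / Real.sqrt δ -
        (1 / δ) * (∫ s in a..t, Real.exp (-((t - s) / Real.sqrt δ)) * ftil δ s) -
        (y' t - y' a)| ≤ ε := by
  intro ε hε
  -- the exact model function
  set g : ℝ → ℝ := fun t => y t - y a - y' a * (t - a) with hgdef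
  have hgderiv : ∀ t ∈ Icc a b, HasDerivWithinAt g (y' t - y' a) (Icc a b) t := by
    intro t ht
    have h1 := (hderiv t ht).sub_const (y a)
    have h2 : HasDerivWithinAt (fun t : ℝ => y' a * (t - a)) (y' a) (Icc a b) t := by
      simpa using (((hasDerivWithinAt_id t (Icc a b)).sub_const a).const_mul (y' a))
    exact h1.sub h2
  have hgcont : ContinuousOn g (Icc a b) := fun t ht => (hgderiv t ht).continuousWithinAt
  have hga : g a = 0 := by simp [hgdef]
  -- the clamped derivative difference
  set c : ℝ → ℝ := fun u => max a (min u b) with hcdef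
  have hccont : Continuous c := continuous_const.max (continuous_id.min continuous_const)
  have hcmem : ∀ u, c u ∈ Icc a b :=
    fun u => ⟨le_max_left _ _, max_le hab.le (min_le_right _ _)⟩
  have hcid : ∀ u ∈ Icc a b, c u = u := by
    intro u hu
    simp [hcdef, min_eq_left hu.2, max_eq_right hu.1]
  have hclip : ∀ s t : ℝ, |c s - c t| ≤ |s - t| := by
    intro s t
    calc |c s - c t| ≤ max |a - a| |min s b - min t b| :=
          abs_max_sub_max_le_max _ _ _ _
      _ ≤ max |a - a| (max |s - t| |b - b|) := by
          exact max_le_max le_rfl (abs_min_sub_min_le_max _ _ _ _)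
      _ ≤ |s - t| := by simp
  set w : ℝ → ℝ := fun u => y' (c u) - y' a with hwdef
  have hwcont : Continuous w := (hy'cont.comp_continuous hccont hcmem).sub continuous_const
  have hwa : w a = 0 := by rw [hwdef]; simp [hcid a ⟨le_rfl, hab.le⟩]
  have hweq : ∀ u ∈ Icc a b, w u = y' u - y' a := by
    intro u hu; simp [hwdef, hcid u hu]
  -- uniform bound
  obtain ⟨M0, hM0⟩ := isCompact_Icc.exists_bound_of_continuousOn hy'cont
  set M : ℝ := M0 + M0 with hMdef
  have hM : ∀ u, |w u| ≤ M := by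
    intro u
    have h1 : |y' (c u)| ≤ M0 := by simpa [Real.norm_eq_abs] using hM0 (c u) (hcmem u)
    have h2 : |y' a| ≤ M0 := by
      simpa [Real.norm_eq_abs] using hM0 a ⟨le_rfl, hab.le⟩
    calc |w u| ≤ |y' (c u)| + |y' a| := abs_sub _ _
      _ ≤ M := add_le_add h1 h2
  have hMnn : 0 ≤ M := le_trans (abs_nonneg _) (hM a)
  -- uniform continuity
  have hUC := isCompact_Icc.uniformContinuousOn_of_continuous hy'cont
  rw [Metric.uniformContinuousOn_iff] at hUC
  obtain ⟨η, hη, hUCη⟩ := hUC (ε / 4) (by positivity)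
  have hwuc : ∀ s t : ℝ, |s - t| < η → |w s - w t| ≤ ε / 4 := by
    intro s t hst
    have hd : dist (c s) (c t) < η := by
      rw [Real.dist_eq]; exact lt_of_le_of_lt (hclip s t) hst
    have := hUCη (c s) (hcmem s) (c t) (hcmem t) hd
    rw [Real.dist_eq] at this
    have heq : w s - w t = y' (c s) - y' (c t) := by simp [hwdef]
    rw [heq]
    exact this.le
  -- G = g on [a,b]
  set G : ℝ → ℝ := fun s => ∫ u in a..s, w u with hGdef
  have hGg : ∀ t ∈ Icc a b, G t = g t := by
    intro t ht
    have hat : a ≤ t := ht.1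
    have hIcc : Icc a t ⊆ Icc a b := Icc_subset_Icc le_rfl ht.2
    have hder : ∀ x ∈ Ioo a t, HasDerivWithinAt g (y' x - y' a) (Ioi x) x := by
      intro x hx
      have hxab : x ∈ Icc a b := ⟨hx.1.le, (hx.2.trans_le ht.2).le⟩
      have hxb : x < b := hx.2.trans_le ht.2
      refine (hgderiv x hxab).mono_of_mem_nhdsWithin ?_
      refine mem_of_superset (Ioo_mem_nhdsGT_of_mem ⟨le_rfl, hxb⟩) ?_
      exact fun z hz => ⟨(hx.1.trans hz.1).le, hz.2.le⟩
    have hint : IntervalIntegrable (fun u => y' u - y' a) MeasureTheory.volume a t :=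
      (((hy'cont.mono hIcc).sub continuousOn_const).intervalIntegrable_of_Icc hat)
    have h1 : ∫ u in a..t, (y' u - y' a) = g t - g a :=
      intervalIntegral.integral_eq_sub_of_hasDeriv_right_of_le hat (hgcont.mono hIcc)
        hder hint
    have h2 : G t = ∫ u in a..t, (y' u - y' a) := by
      apply intervalIntegral.integral_congr
      intro u hu
      rw [uIcc_of_le hat] at hu
      exact hweq u (hIcc hu)
    rw [h2, h1, hga, sub_zero]
  -- choice of δ₀ by a limit argument
  set Cq : ℝ := 2 * M * (b - a) with hCq
  have hφ : Tendsto (fun α : ℝ => 2 * α + Cq * (Real.exp (-(η / α)) / α)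
      + M * Real.exp (-(η / α))) (𝓝[>] (0 : ℝ)) (𝓝 0) := by
    have hinv : Tendsto (fun α : ℝ => η / α) (𝓝[>] (0 : ℝ)) atTop := by
      simpa [div_eq_mul_inv] using tendsto_inv_nhdsGT_zero.const_mul_atTop hη
    have hexp : Tendsto (fun α : ℝ => Real.exp (-(η / α))) (𝓝[>] (0 : ℝ)) (𝓝 0) :=
      Real.tendsto_exp_neg_atTop_nhds_zero.comp hinv
    have hxe : Tendsto (fun x : ℝ => x * Real.exp (-x)) atTop (𝓝 0) := by
      simpa using Real.tendsto_pow_mul_exp_neg_atTop_nhds_zero 1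
    have h1 : Tendsto (fun α : ℝ => (Cq / η) * ((η / α) * Real.exp (-(η / α))))
        (𝓝[>] (0 : ℝ)) (𝓝 0) := by
      simpa using (hxe.comp hinv).const_mul (Cq / η)
    have h2 : Tendsto (fun α : ℝ => Cq * (Real.exp (-(η / α)) / α))
        (𝓝[>] (0 : ℝ)) (𝓝 0) := by
      refine h1.congr' ?_
      filter_upwards [self_mem_nhdsWithin] with α hα
      have hα' : (α : ℝ) ≠ 0 := ne_of_gt hα
      field_simp
    have h0 : Tendsto (fun α : ℝ => 2 * α) (𝓝[>] (0 : ℝ)) (𝓝 0) := by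
      have hcm : Continuous (fun α : ℝ => 2 * α) := continuous_const.mul continuous_id
      have := (hcm.tendsto (0 : ℝ)).mono_left (nhdsWithin_le_nhds (s := Ioi (0:ℝ)))
      simpa using this
    have := (h0.add h2).add (hexp.const_mul M)
    simpa using this
  have hev : ∀ᶠ α in 𝓝[>] (0 : ℝ), 2 * α + Cq * (Real.exp (-(η / α)) / α)
      + M * Real.exp (-(η / α)) < ε / 2 :=
    hφ.eventually_lt_const (by positivity)
  obtain ⟨u, hu, hsub⟩ := mem_nhdsGT_iff_exists_Ioo_subset.mp hev
  have hu0 : (0 : ℝ) < u := hu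
  refine ⟨u ^ 2, by positivity, ?_⟩
  intro δ hδ hδu t ht
  set α := Real.sqrt δ with hαdef
  have hα : 0 < α := Real.sqrt_pos.mpr hδ
  have hα' : α ≠ 0 := ne_of_gt hα
  have hαu : α < u := (Real.sqrt_lt' hu0).mpr hδu
  have hφα : 2 * α + Cq * (Real.exp (-(η / α)) / α) + M * Real.exp (-(η / α)) < ε / 2 :=
    hsub ⟨hα, hαu⟩
  have hδα : δ = α * α := (Real.mul_self_sqrt hδ.le).symm
  have hat : a ≤ t := ht.1
  have hIcc : Icc a t ⊆ Icc a b := Icc_subset_Icc le_rfl ht.2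
  set f : ℝ → ℝ := ftil δ with hfdef
  have hfc : ContinuousOn f (uIcc a t) := by
    rw [uIcc_of_le hat]; exact (hcont δ hδ).mono hIcc
  have hgc : ContinuousOn g (uIcc a t) := by
    rw [uIcc_of_le hat]; exact hgcont.mono hIcc
  set e : ℝ → ℝ := fun s => Real.exp (-((t - s) / α)) with hedef
  have hec : Continuous e :=
    Real.continuous_exp.comp (((continuous_const.sub continuous_id).div_const α).neg)
  have he_nn : ∀ s, 0 ≤ e s := fun s => (Real.exp_pos _).le
  set E : ℝ := Real.exp (-((t - a) / α)) with hEdef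
  have hE_nn : 0 ≤ E := (Real.exp_pos _).le
  have hE_le1 : E ≤ 1 := by
    rw [hEdef, Real.exp_le_one_iff]
    have : 0 ≤ (t - a) / α := div_nonneg (by linarith) hα.le
    linarith
  set ex : ℝ := Real.exp (-(η / α)) with hexdef
  have hex_nn : 0 ≤ ex := (Real.exp_pos _).le
  -- integrabilities
  have hi_e : IntervalIntegrable e MeasureTheory.volume a t := hec.intervalIntegrable a t
  have hi_ef : IntervalIntegrable (fun s => e s * f s) MeasureTheory.volume a t :=
    (hec.continuousOn.mul hfc).intervalIntegrable
  have hi_eg : IntervalIntegrable (fun s => e s * g s) MeasureTheory.volume a t :=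
    (hec.continuousOn.mul hgc).intervalIntegrable
  have hi_ew : IntervalIntegrable (fun s => e s * w s) MeasureTheory.volume a t :=
    (hec.mul hwcont).intervalIntegrable a t
  have hi_efg : IntervalIntegrable (fun s => e s * (f s - g s)) MeasureTheory.volume a t :=
    (hec.continuousOn.mul (hfc.sub hgc)).intervalIntegrable
  have hi_ewt : IntervalIntegrable (fun s => e s * (w s - w t)) MeasureTheory.volume a t :=
    (hec.mul (hwcont.sub continuous_const)).intervalIntegrable a t
  have hintE : ∫ s in a..t, e s = α * (1 - E) := sd_exp_int a t α hα
  -- decomposition identities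
  have hEG : ∫ s in a..t, e s * g s = α * g t - α * ∫ s in a..t, e s * w s := by
    have h1 : ∫ s in a..t, e s * g s = ∫ s in a..t, e s * (∫ u in a..s, w u) := by
      apply intervalIntegral.integral_congr
      intro s hs
      rw [uIcc_of_le hat] at hs
      show e s * g s = e s * ∫ u in a..s, w u
      rw [show (∫ u in a..s, w u) = G s from rfl, hGg s (hIcc hs)]
    have h2 := sd_parts w hwcont a t α hα
    rw [show (∫ u in a..t, w u) = G t from rfl, hGg t ht] at h2
    rw [h1]
    exact h2
  have hsplitf : ∫ s in a..t, e s * f s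
      = (∫ s in a..t, e s * (f s - g s)) + ∫ s in a..t, e s * g s := by
    rw [← intervalIntegral.integral_add hi_efg hi_eg]
    apply intervalIntegral.integral_congr
    intro s _; ring
  have hEw : ∫ s in a..t, e s * w s
      = (∫ s in a..t, e s * (w s - w t)) + w t * (α * (1 - E)) := by
    have h1 : ∫ s in a..t, e s * w s
        = ∫ s in a..t, (e s * (w s - w t) + w t * e s) := by
      apply intervalIntegral.integral_congr
      intro s _; ring
    rw [h1, intervalIntegral.integral_add hi_ewt
      (show IntervalIntegrable (fun s => w t * e s) MeasureTheory.volume a t from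
        (continuous_const.mul hec).intervalIntegrable a t),
      intervalIntegral.integral_const_mul, hintE]
  set I1 : ℝ := ∫ s in a..t, e s * (f s - g s) with hI1
  set I2 : ℝ := ∫ s in a..t, e s * (w s - w t) with hI2
  -- noise bounds
  have hnoise' : ∀ s ∈ Icc a b, |f s - g s| ≤ δ := fun s hs => hnoise δ hδ s hs
  have hB : |I1| ≤ δ * α := by
    calc |I1| ≤ ∫ s in a..t, |e s * (f s - g s)| :=
          intervalIntegral.abs_integral_le_integral_abs hat
      _ ≤ ∫ s in a..t, δ * e s := by
          apply intervalIntegral.integral_mono_on hat hi_efg.abs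
            ((continuous_const.mul hec).intervalIntegrable a t)
          intro s hs
          rw [abs_mul, abs_of_nonneg (he_nn s), mul_comm]
          exact mul_le_mul_of_nonneg_right (hnoise' s (hIcc hs)) (he_nn s)
      _ = δ * (α * (1 - E)) := by
          rw [intervalIntegral.integral_const_mul, hintE]
      _ ≤ δ * α := by nlinarith [mul_nonneg (mul_nonneg hδ.le hα.le) hE_nn]
  have hC1 : |I2| ≤ ε / 4 * α + 2 * M * ex * (t - a) := by
    calc |I2| ≤ ∫ s in a..t, |e s * (w s - w t)| :=
          intervalIntegral.abs_integral_le_integral_abs hat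
      _ ≤ ∫ s in a..t, (ε / 4 * e s + 2 * M * ex) := by
          apply intervalIntegral.integral_mono_on hat hi_ewt.abs
            (show IntervalIntegrable (fun s => ε / 4 * e s + 2 * M * ex) MeasureTheory.volume a t from
              ((continuous_const.mul hec).add continuous_const).intervalIntegrable a t)
          intro s hs
          rw [abs_mul, abs_of_nonneg (he_nn s)]
          rcases lt_or_ge (t - s) η with hcase | hcase
          · have h1 : |w s - w t| ≤ ε / 4 := by
              apply hwuc
              rw [abs_of_nonpos (by linarith [hs.2] : s - t ≤ 0)]
              linarith
            have h2 : e s * |w s - w t| ≤ ε / 4 * e s := by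
              rw [mul_comm]
              exact mul_le_mul_of_nonneg_right h1 (he_nn s)
            nlinarith
          · have h1 : e s ≤ ex := by
              rw [hedef, hexdef]
              apply Real.exp_le_exp.mpr
              have h0 : η / α ≤ (t - s) / α := by gcongr
              linarith
            have h2 : |w s - w t| ≤ 2 * M := by
              calc |w s - w t| ≤ |w s| + |w t| := abs_sub _ _
                _ ≤ M + M := add_le_add (hM s) (hM t)
                _ = 2 * M := by ring
            have h3 : e s * |w s - w t| ≤ ex * (2 * M) :=
              mul_le_mul h1 h2 (abs_nonneg _) hex_nn
            have h4 : 0 ≤ ε / 4 * e s := by positivity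
            nlinarith
      _ = ε / 4 * (α * (1 - E)) + 2 * M * ex * (t - a) := by
          rw [intervalIntegral.integral_add
            (show IntervalIntegrable (fun s => ε / 4 * e s) MeasureTheory.volume a t from
              (continuous_const.mul hec).intervalIntegrable a t)
            (intervalIntegrable_const), intervalIntegral.integral_const_mul, hintE,
            intervalIntegral.integral_const, smul_eq_mul]
          ring
      _ ≤ ε / 4 * α + 2 * M * ex * (t - a) := by
          nlinarith [mul_nonneg (mul_nonneg (by positivity : (0:ℝ) ≤ ε / 4) hα.le) hE_nn]
  have hC2 : |w t| * E ≤ ε / 4 + M * ex := by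
    rcases lt_or_ge (t - a) η with hcase | hcase
    · have h1 : |w t| ≤ ε / 4 := by
        have := hwuc t a (by rw [abs_of_nonneg (by linarith : (0:ℝ) ≤ t - a)]; exact hcase)
        simpa [hwa] using this
      calc |w t| * E ≤ (ε / 4) * 1 := mul_le_mul h1 hE_le1 hE_nn (by positivity)
        _ ≤ ε / 4 + M * ex := by nlinarith [mul_nonneg hMnn hex_nn]
    · have h1 : E ≤ ex := by
        rw [hEdef, hexdef]
        apply Real.exp_le_exp.mpr
        have h2 : η / α ≤ (t - a) / α := by gcongr
        linarith
      have h3 : |w t| * E ≤ M * ex := mul_le_mul (hM t) h1 hE_nn hMnn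
      nlinarith
  -- final algebraic identity
  have hkey : f t / α - (1 / δ) * (∫ s in a..t, e s * f s) - (y' t - y' a)
      = (f t - g t) / α - (1 / δ) * I1 + ((1 / α) * I2 - w t * E) := by
    rw [hsplitf, hEG, hEw, ← hweq t ht, hδα]
    field_simp
    ring
  have hgoal : |f t / α - (1 / δ) * (∫ s in a..t, e s * f s) - (y' t - y' a)| ≤ ε := by
    rw [hkey]
    have htri : |(f t - g t) / α - (1 / δ) * I1 + ((1 / α) * I2 - w t * E)|
        ≤ (|f t - g t| / α + (1 / δ) * |I1|) + ((1 / α) * |I2| + |w t| * E) := by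
      calc |(f t - g t) / α - (1 / δ) * I1 + ((1 / α) * I2 - w t * E)|
          ≤ |(f t - g t) / α - (1 / δ) * I1| + |(1 / α) * I2 - w t * E| := abs_add_le _ _
        _ ≤ (|(f t - g t) / α| + |(1 / δ) * I1|) + (|(1 / α) * I2| + |w t * E|) :=
            add_le_add (abs_sub _ _) (abs_sub _ _)
        _ = (|f t - g t| / α + (1 / δ) * |I1|) + ((1 / α) * |I2| + |w t| * E) := by
            rw [abs_div, abs_of_pos hα, abs_mul, abs_mul, abs_mul,
              abs_of_pos (by positivity : (0:ℝ) < 1 / δ),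
              abs_of_pos (by positivity : (0:ℝ) < 1 / α), abs_of_nonneg hE_nn]
    have h1 : |f t - g t| / α ≤ α := by
      have h0 := hnoise' t ht
      rw [hδα] at h0
      rw [div_le_iff₀ hα]
      exact h0
    have h2 : (1 / δ) * |I1| ≤ α := by
      calc (1 / δ) * |I1| ≤ (1 / δ) * (δ * α) :=
            mul_le_mul_of_nonneg_left hB (by positivity)
        _ = α := by
            have hcalc : (1 / δ) * (δ * α) = (δ / δ) * α := by ring
            rw [hcalc, div_self hδ.ne', one_mul]
    have h3 : (1 / α) * |I2| ≤ ε / 4 + Cq * (ex / α) := by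
      have hta : t - a ≤ b - a := by linarith [ht.2]
      have h4 : (1 / α) * |I2| ≤ (1 / α) * (ε / 4 * α + 2 * M * ex * (t - a)) :=
        mul_le_mul_of_nonneg_left hC1 (by positivity)
      have h5 : 2 * M * ex * (t - a) ≤ Cq * ex := by
        rw [hCq]
        nlinarith [mul_nonneg (mul_nonneg hMnn hex_nn) (sub_nonneg.mpr hta)]
      calc (1 / α) * |I2| ≤ (1 / α) * (ε / 4 * α + Cq * ex) := by
            apply mul_le_mul_of_nonneg_left _ (by positivity : (0:ℝ) ≤ 1 / α)
            exact hC1.trans (add_le_add_right h5 _)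
        _ = ε / 4 + Cq * (ex / α) := by
            have hcalc : (1 / α) * (ε / 4 * α + Cq * ex)
                = ε / 4 * (α / α) + Cq * (ex / α) := by ring
            rw [hcalc, div_self hα', mul_one]
    calc |(f t - g t) / α - (1 / δ) * I1 + ((1 / α) * I2 - w t * E)|
        ≤ (|f t - g t| / α + (1 / δ) * |I1|) + ((1 / α) * |I2| + |w t| * E) := htri
      _ ≤ (α + α) + ((ε / 4 + Cq * (ex / α)) + (ε / 4 + M * ex)) := by
          exact add_le_add (add_le_add h1 h2) (add_le_add h3 hC2)
      _ ≤ ε / 2 + ε / 2 := by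
          have : 2 * α + Cq * (ex / α) + M * ex < ε / 2 := hφα
          linarith
      _ = ε := by ring
  exact hgoal
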